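/- Let A ∈ ℝ^{m×n}, b ∈ ℝ^m, L ∈ ℝ^{s×n} with full column rank, {W_i}_{i=1}^{M} with Σ_{i=1}^{M} W_i W_iᵀ = I_m, and τ(1), τ(2), … i.i.d. uniform on {1,…,M}. Let Λ_i ∈ ℝ with Σ_{i=1}^{k}Λ_i > 0 for all k and suppose λ := lim_{k→∞} (M/k)Σ_{i=1}^{k}Λ_i exists and is positive. Define x_k = (Σ_{i=1}^{k}Λ_i LᵀL + Σ_{i=1}^{k} A_{τ(i)}ᵀA_{τ(i)})^{-1} Σ_{i=1}^{k} A_{τ(i)}ᵀ b_{τ(i)}. Then x_k → (AᵀA + λLᵀL)^{-1}Aᵀb almost surely as k → ∞. -/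

import Mathlib

open Matrix Finset Filter MeasureTheory ProbabilityTheory

/-- Auxiliary: SLLN for functions of i.i.d. uniform `Fin M`-valued random variables. -/
lemma slln_fin_unif {M : ℕ} (hM : 0 < M) {Ω : Type*} [MeasurableSpace Ω] (μ : Measure Ω)
    [IsProbabilityMeasure μ] (τ : ℕ → Ω → Fin M) (hmeas : ∀ k, Measurable (τ k))
    (hindep : iIndepFun τ μ)
    (hunif : ∀ k, ∀ i : Fin M, μ (τ k ⁻¹' {i}) = (M : ENNReal)⁻¹)
    (f : Fin M → ℝ) :
    ∀ᵐ ω ∂μ, Tendsto (fun k : ℕ => (∑ i ∈ Finset.range k, f (τ i ω)) / k) atTop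
      (nhds ((∑ i, f i) / M)) := by
  have hf : Measurable f := measurable_of_finite f
  have hprob : ∀ k, IsProbabilityMeasure (Measure.map (τ k) μ) := fun k =>
    Measure.isProbabilityMeasure_map (hmeas k).aemeasurable
  have hfint : Integrable f (Measure.map (τ 0) μ) := by
    have := hprob 0; exact Integrable.of_finite
  have hint : Integrable (f ∘ τ 0) μ :=
    (integrable_map_measure hfint.1 (hmeas 0).aemeasurable).mp hfint
  have hmapeq : ∀ k, Measure.map (τ k) μ = Measure.map (τ 0) μ := by
    intro k
    refine MeasureTheory.Measure.ext_of_singleton fun a => ?_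
    rw [Measure.map_apply (hmeas k) (measurableSet_singleton a),
      Measure.map_apply (hmeas 0) (measurableSet_singleton a), hunif k a, hunif 0 a]
  have hident : ∀ k, IdentDistrib (f ∘ τ k) (f ∘ τ 0) μ μ := by
    intro k
    have h1 : IdentDistrib (τ k) (τ 0) μ μ :=
      ⟨(hmeas k).aemeasurable, (hmeas 0).aemeasurable, hmapeq k⟩
    exact h1.comp hf
  have hpind : Pairwise (Function.onFun (IndepFun · · μ) (fun k => f ∘ τ k)) := by
    intro i j hij
    exact (hindep.indepFun hij).comp hf hf
  have hmean : μ[f ∘ τ 0] = (∑ i, f i) / M := by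
    have h1 : μ[f ∘ τ 0] = ∫ a, f a ∂(Measure.map (τ 0) μ) :=
      (integral_map (hmeas 0).aemeasurable hf.aestronglyMeasurable).symm
    rw [h1, integral_fintype hfint, Finset.sum_congr rfl fun i _ => by rw [measureReal_def]]
    have h2 : ∀ i : Fin M, (Measure.map (τ 0) μ) {i} = (M : ENNReal)⁻¹ := by
      intro i
      rw [Measure.map_apply (hmeas 0) (measurableSet_singleton i)]
      exact hunif 0 i
    have h3 : ∀ i : Fin M, ((Measure.map (τ 0) μ) {i}).toReal • f i = (M : ℝ)⁻¹ * f i := by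
      intro i
      rw [h2 i, smul_eq_mul]
      congr 1
      rw [ENNReal.toReal_inv]
      simp
    rw [Finset.sum_congr rfl (fun i _ => h3 i), ← Finset.mul_sum]
    ring
  have := strong_law_ae_real (fun k => f ∘ τ k) hint hpind hident
  filter_upwards [this] with ω hω
  rw [hmean] at hω
  exact hω

lemma posSemidef_transpose_mul_self' {m n : ℕ} (A : Matrix (Fin m) (Fin n) ℝ) :
    (Aᵀ * A).PosSemidef := by
  simpa [Matrix.conjTranspose_eq_transpose_of_trivial] using
    Matrix.posSemidef_conjTranspose_mul_self A

lemma posDef_transpose_mul_self_of_rank {s n : ℕ} (L : Matrix (Fin s) (Fin n) ℝ)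
    (hL : L.rank = n) : (Lᵀ * L).PosDef := by
  refine Matrix.PosDef.of_dotProduct_mulVec_pos (posSemidef_transpose_mul_self' L).1 fun x hx => ?_
  have hker : LinearMap.ker L.mulVecLin = ⊥ := by
    have h1 := LinearMap.finrank_range_add_finrank_ker L.mulVecLin
    have h2 : Module.finrank ℝ (Fin n → ℝ) = n := by simp
    rw [h2] at h1
    have h3 : Module.finrank ℝ (LinearMap.range L.mulVecLin) = n := hL
    have h4 : Module.finrank ℝ (LinearMap.ker L.mulVecLin) = 0 := by omega
    exact Submodule.finrank_eq_zero.mp h4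
  have hLx : L.mulVec x ≠ 0 := by
    intro h
    apply hx
    have : x ∈ LinearMap.ker L.mulVecLin := by
      simpa [Matrix.mulVecLin_apply] using h
    rwa [hker, Submodule.mem_bot] at this
  have hcalc : star x ⬝ᵥ (Lᵀ * L) *ᵥ x = (L *ᵥ x) ⬝ᵥ (L *ᵥ x) := by
    rw [← Matrix.mulVec_mulVec, Matrix.dotProduct_mulVec, star_trivial,
      Matrix.vecMul_transpose]
  rw [hcalc]
  rcases lt_or_eq_of_le (Finset.sum_nonneg fun i _ => mul_self_nonneg ((L *ᵥ x) i)) with h | h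
  · exact h
  · exact absurd (dotProduct_self_eq_zero.mp h.symm) hLx

lemma posDef_smul' {n : ℕ} {X : Matrix (Fin n) (Fin n) ℝ} (hX : X.PosDef) {c : ℝ}
    (hc : 0 < c) : (c • X).PosDef := by
  refine Matrix.PosDef.of_dotProduct_mulVec_pos ?_ fun x hx => ?_
  · unfold Matrix.IsHermitian
    rw [Matrix.conjTranspose_smul]
    simp only [star_trivial]
    rw [hX.1]
  · rw [Matrix.smul_mulVec, dotProduct_smul, smul_eq_mul]
    exact mul_pos hc (hX.dotProduct_mulVec_pos hx)

lemma sum_mulVec_aux {a c : ℕ} {ι : Type*} (s : Finset ι)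
    (f : ι → Matrix (Fin a) (Fin c) ℝ) (v : Fin c → ℝ) :
    (∑ i ∈ s, f i) *ᵥ v = ∑ i ∈ s, f i *ᵥ v := by
  classical
  induction s using Finset.induction with
  | empty => simp
  | insert _ _ h ih => rw [Finset.sum_insert h, Finset.sum_insert h, Matrix.add_mulVec, ih]

/-- with i.i.d. uniform sampling indices and regularization increments
`Λ_i` whose Cesàro-type averages `(M/k)Σ_{i≤k}Λ_i` converge to `λ > 0`, the sampled
Tikhonov iterates converge almost surely to the Tikhonov solution `(AᵀA + λLᵀL)⁻¹Aᵀb`. -/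
theorem sTik_random_sampling_as_convergence
    {m n s ℓ M : ℕ} (hM : 0 < M)
    (A : Matrix (Fin m) (Fin n) ℝ) (b : Fin m → ℝ)
    (L : Matrix (Fin s) (Fin n) ℝ) (hL : L.rank = n)
    (W : Fin M → Matrix (Fin m) (Fin ℓ) ℝ)
    (hW : ∑ i, W i * (W i)ᵀ = (1 : Matrix (Fin m) (Fin m) ℝ))
    (Ai : Fin M → Matrix (Fin ℓ) (Fin n) ℝ) (hAi : ∀ i, Ai i = (W i)ᵀ * A)
    (bi : Fin M → Fin ℓ → ℝ) (hbi : ∀ i, bi i = (W i)ᵀ.mulVec b)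
    (Lam : ℕ → ℝ) (lam : ℕ → ℝ)
    (hlamdef : ∀ j, lam j = ∑ i ∈ Finset.range j, Lam i)
    (hpos : ∀ k, 0 < k → 0 < lam k)
    (lam0 : ℝ) (hlam0 : 0 < lam0)
    (hlim : Tendsto (fun k : ℕ => (M : ℝ) / (k : ℝ) * lam k) atTop (nhds lam0))
    {Ω : Type*} [MeasurableSpace Ω] (μ : Measure Ω) [IsProbabilityMeasure μ]
    (τ : ℕ → Ω → Fin M) (hmeas : ∀ k, Measurable (τ k))
    (hindep : iIndepFun τ μ)
    (hunif : ∀ k, ∀ i : Fin M, μ (τ k ⁻¹' {i}) = (M : ENNReal)⁻¹)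
    (x : ℕ → Ω → Fin n → ℝ)
    (hx : ∀ k ω, x k ω =
      (lam k • (Lᵀ * L) + ∑ i ∈ Finset.range k, (Ai (τ i ω))ᵀ * Ai (τ i ω))⁻¹.mulVec
        (∑ i ∈ Finset.range k, (Ai (τ i ω))ᵀ.mulVec (bi (τ i ω)))) :
    ∀ᵐ ω ∂μ, Tendsto (fun k => x k ω) atTop
      (nhds ((Aᵀ * A + lam0 • (Lᵀ * L))⁻¹.mulVec (Aᵀ.mulVec b))) := by
  classical
  set G : Fin M → Matrix (Fin n) (Fin n) ℝ := fun j => (Ai j)ᵀ * Ai j with hG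
  set w : Fin M → Fin n → ℝ := fun j => (Ai j)ᵀ.mulVec (bi j) with hw
  -- sum identities
  have hGsum : ∑ j, G j = Aᵀ * A := by
    have h1 : ∀ j, G j = Aᵀ * (W j * (W j)ᵀ) * A := by
      intro j
      simp only [hG, hAi, Matrix.transpose_mul, Matrix.transpose_transpose, Matrix.mul_assoc]
    rw [Finset.sum_congr rfl fun j _ => h1 j]
    rw [← Matrix.sum_mul, ← Matrix.mul_sum, hW, Matrix.mul_one]
  have hwsum : ∑ j, w j = Aᵀ.mulVec b := by
    have h1 : ∀ j, w j = (Aᵀ * (W j * (W j)ᵀ)).mulVec b := by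
      intro j
      simp only [hw, hbi, hAi, Matrix.transpose_mul, Matrix.transpose_transpose,
        Matrix.mulVec_mulVec, Matrix.mul_assoc]
    rw [Finset.sum_congr rfl fun j _ => h1 j]
    rw [← sum_mulVec_aux, ← Matrix.mul_sum, hW, Matrix.mul_one]
  -- positive definiteness facts
  have hLTL : (Lᵀ * L).PosDef := posDef_transpose_mul_self_of_rank L hL
  set B : Matrix (Fin n) (Fin n) ℝ := Aᵀ * A + lam0 • (Lᵀ * L) with hB
  have hBpd : B.PosDef :=
    Matrix.PosDef.posSemidef_add (posSemidef_transpose_mul_self' A) (posDef_smul' hLTL hlam0)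
  have hBdet : B.det ≠ 0 := hBpd.det_pos.ne'
  -- a.s. SLLN for entries
  have hGae : ∀ᵐ ω ∂μ, ∀ p q : Fin n,
      Tendsto (fun k : ℕ => (∑ i ∈ Finset.range k, G (τ i ω) p q) / k) atTop
        (nhds ((Aᵀ * A) p q / M)) := by
    rw [ae_all_iff]; intro p; rw [ae_all_iff]; intro q
    have := slln_fin_unif hM μ τ hmeas hindep hunif (fun j => G j p q)
    have hs : (∑ j, G j p q) = (Aᵀ * A) p q := by
      rw [← hGsum]; simp [Matrix.sum_apply]
    rw [hs] at this
    exact this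
  have hwae : ∀ᵐ ω ∂μ, ∀ p : Fin n,
      Tendsto (fun k : ℕ => (∑ i ∈ Finset.range k, w (τ i ω) p) / k) atTop
        (nhds ((Aᵀ.mulVec b) p / M)) := by
    rw [ae_all_iff]; intro p
    have := slln_fin_unif hM μ τ hmeas hindep hunif (fun j => w j p)
    have hs : (∑ j, w j p) = (Aᵀ.mulVec b) p := by
      rw [← hwsum]; simp
    rw [hs] at this
    exact this
  filter_upwards [hGae, hwae] with ω hGω hwω
  -- scaled quantities
  set S : ℕ → Matrix (Fin n) (Fin n) ℝ := fun k =>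
    ((M : ℝ) / k) • (lam k • (Lᵀ * L) + ∑ i ∈ Finset.range k, G (τ i ω)) with hSdef
  set v : ℕ → Fin n → ℝ := fun k =>
    ((M : ℝ) / k) • (∑ i ∈ Finset.range k, w (τ i ω)) with hvdef
  have hMne : (M : ℝ) ≠ 0 := Nat.cast_ne_zero.mpr hM.ne'
  -- convergence of S to B
  have hS : Tendsto S atTop (nhds B) := by
    refine tendsto_pi_nhds.mpr fun p => ?_
    rw [tendsto_pi_nhds]; intro q
    have t1 : Tendsto (fun k : ℕ => ((M : ℝ) / k * lam k) * (Lᵀ * L) p q) atTop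
        (nhds (lam0 * (Lᵀ * L) p q)) := hlim.mul_const _
    have t2 : Tendsto (fun k : ℕ => (M : ℝ) * ((∑ i ∈ Finset.range k, G (τ i ω) p q) / k))
        atTop (nhds ((M : ℝ) * ((Aᵀ * A) p q / M))) := tendsto_const_nhds.mul (hGω p q)
    have hlimval : (M : ℝ) * ((Aᵀ * A) p q / M) = (Aᵀ * A) p q := by field_simp
    rw [hlimval] at t2
    have heq : ∀ k : ℕ, S k p q =
        ((M : ℝ) / k * lam k) * (Lᵀ * L) p q
          + (M : ℝ) * ((∑ i ∈ Finset.range k, G (τ i ω) p q) / k) := by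
      intro k
      simp only [hSdef, Matrix.smul_apply, Matrix.add_apply, Matrix.sum_apply, smul_eq_mul]
      ring
    have := t2.add t1
    rw [add_comm] at this
    refine Tendsto.congr (fun k => (heq k).symm) ?_
    have : B p q = lam0 * (Lᵀ * L) p q + (Aᵀ * A) p q := by
      simp only [hB, Matrix.add_apply, Matrix.smul_apply, smul_eq_mul]; ring
    rw [this]
    exact t1.add t2
  -- convergence of v to Aᵀb
  have hv : Tendsto v atTop (nhds (Aᵀ.mulVec b)) := by
    rw [tendsto_pi_nhds]; intro p
    have t2 : Tendsto (fun k : ℕ => (M : ℝ) * ((∑ i ∈ Finset.range k, w (τ i ω) p) / k))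
        atTop (nhds ((M : ℝ) * ((Aᵀ.mulVec b) p / M))) := tendsto_const_nhds.mul (hwω p)
    have hlimval : (M : ℝ) * ((Aᵀ.mulVec b) p / M) = (Aᵀ.mulVec b) p := by field_simp
    rw [hlimval] at t2
    refine Tendsto.congr (fun k => ?_) t2
    simp only [hvdef, Pi.smul_apply, Finset.sum_apply, smul_eq_mul]
    ring
  -- determinant and adjugate convergence
  have hdet : Tendsto (fun k => (S k).det) atTop (nhds B.det) :=
    ((continuous_id.matrix_det).tendsto B).comp hS
  have hdetinv : Tendsto (fun k => ((S k).det)⁻¹) atTop (nhds (B.det)⁻¹) :=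
    hdet.inv₀ hBdet
  have hadj : Tendsto (fun k => (S k).adjugate) atTop (nhds B.adjugate) :=
    ((continuous_id.matrix_adjugate).tendsto B).comp hS
  -- convergence of the candidate expression
  have hF : Tendsto (fun k => (((S k).det)⁻¹ • (S k).adjugate).mulVec (v k)) atTop
      (nhds (((B.det)⁻¹ • B.adjugate).mulVec (Aᵀ.mulVec b))) := by
    rw [tendsto_pi_nhds]; intro p
    have heq : ∀ (N : Matrix (Fin n) (Fin n) ℝ) (c : ℝ) (u : Fin n → ℝ),
        ((c • N).mulVec u) p = ∑ q, c * N p q * u q := by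
      intro N c u
      simp [Matrix.mulVec, dotProduct, mul_assoc]
    simp only [heq]
    apply tendsto_finset_sum
    intro q _
    have h1 : Tendsto (fun k => (S k).adjugate p q) atTop (nhds (B.adjugate p q)) := by
      have := hadj
      replace this := tendsto_pi_nhds.mp this
      have := this p
      rw [tendsto_pi_nhds] at this
      exact this q
    have h2 : Tendsto (fun k => v k q) atTop (nhds ((Aᵀ.mulVec b) q)) := by
      rw [tendsto_pi_nhds] at hv; exact hv q
    exact (hdetinv.mul h1).mul h2
  -- identify x k ω with the candidate expression for k ≥ 1
  have hxeq : ∀ᶠ k in atTop, x k ω = (((S k).det)⁻¹ • (S k).adjugate).mulVec (v k) := by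
    filter_upwards [eventually_ge_atTop 1] with k hk
    set X : Matrix (Fin n) (Fin n) ℝ := lam k • (Lᵀ * L) + ∑ i ∈ Finset.range k, G (τ i ω)
      with hXdef
    have hkpos : (0 : ℝ) < k := by exact_mod_cast hk
    have hc : (0 : ℝ) < (M : ℝ) / k := div_pos (by exact_mod_cast hM) hkpos
    have hXpd : X.PosDef := by
      refine Matrix.PosDef.add_posSemidef (posDef_smul' hLTL (hpos k hk)) ?_
      refine Finset.sum_induction _ _ (fun a b ha hb => ha.add hb) Matrix.PosSemidef.zero ?_
      intro i _
      simpa [hG, Matrix.conjTranspose_eq_transpose_of_trivial] using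
        Matrix.posSemidef_conjTranspose_mul_self (Ai (τ i ω))
    have hXdet : IsUnit X.det := hXpd.det_pos.ne'.isUnit
    set c : ℝ := (M : ℝ) / k with hcdef
    have hSX : S k = c • X := rfl
    have hSinv : (S k)⁻¹ = c⁻¹ • X⁻¹ := by
      apply Matrix.inv_eq_right_inv
      rw [hSX, Matrix.smul_mul, Matrix.mul_smul, smul_smul, mul_inv_cancel₀ hc.ne',
        Matrix.mul_nonsing_inv X hXdet, one_smul]
    have hSform : (((S k).det)⁻¹ • (S k).adjugate) = (S k)⁻¹ := by
      rw [Matrix.inv_def, Ring.inverse_eq_inv]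
    rw [hSform, hSinv, hx k ω]
    have hvX : v k = c • (∑ i ∈ Finset.range k, w (τ i ω)) := rfl
    rw [hvX, Matrix.smul_mulVec, Matrix.mulVec_smul, smul_smul,
      inv_mul_cancel₀ hc.ne', one_smul]
  -- conclude
  have hBinv : (B)⁻¹ = (B.det)⁻¹ • B.adjugate := by
    rw [Matrix.inv_def, Ring.inverse_eq_inv]
  rw [hBinv]
  exact hF.congr' (EventuallyEq.symm hxeq)
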